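/- Let β, β' ≤ 1. If there exist unbounded sets and a bi-Lipschitz bijection F between Γ_β = {(x, x^β) : x ≥ 1} ∪ {(x,0) : x ≥ 1} and Γ_{β'} = {(x, x^{β'}) : x ≥ 1} ∪ {(x,0) : x ≥ 1} mapping each of the two component curves onto the corresponding one, then β = β'. -/

import Mathlib

/-- The curve {(x, x^β) : x ≥ 1} ⊂ ℝ². -/
def powCurve (β : ℝ) : Set (EuclideanSpace ℝ (Fin 2)) := {p | 1 ≤ p 0 ∧ p 1 = (p 0) ^ β}

/-- The horizontal ray {(x, 0) : x ≥ 1} ⊂ ℝ². -/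
def horizRay : Set (EuclideanSpace ℝ (Fin 2)) := {p | 1 ≤ p 0 ∧ p 1 = 0}

noncomputable def pt2 (a b : ℝ) : EuclideanSpace ℝ (Fin 2) := WithLp.toLp 2 ![a, b]

lemma pt2_zero (a b : ℝ) : pt2 a b 0 = a := rfl
lemma pt2_one (a b : ℝ) : pt2 a b 1 = b := rfl

lemma comp_le_norm (v : EuclideanSpace ℝ (Fin 2)) (i : Fin 2) : |v i| ≤ ‖v‖ := by
  rw [EuclideanSpace.norm_eq]
  have h : |v i| = Real.sqrt (‖v i‖ ^ 2) := by rw [Real.sqrt_sq_eq_abs]; simp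
  rw [h]
  apply Real.sqrt_le_sqrt
  exact Finset.single_le_sum (f := fun j => ‖v j‖ ^ 2) (fun j _ => by positivity) (Finset.mem_univ i)

lemma norm_le_sum2 (v : EuclideanSpace ℝ (Fin 2)) : ‖v‖ ≤ |v 0| + |v 1| := by
  rw [EuclideanSpace.norm_eq, Fin.sum_univ_two]
  have h : ‖v 0‖ ^ 2 + ‖v 1‖ ^ 2 ≤ (|v 0| + |v 1|) ^ 2 := by
    simp only [Real.norm_eq_abs]
    nlinarith [abs_nonneg (v 0), abs_nonneg (v 1)]
  calc Real.sqrt (‖v 0‖ ^ 2 + ‖v 1‖ ^ 2) ≤ Real.sqrt ((|v 0| + |v 1|) ^ 2) := Real.sqrt_le_sqrt h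
    _ = |v 0| + |v 1| := Real.sqrt_sq (by positivity)

lemma sub_apply2 (p q : EuclideanSpace ℝ (Fin 2)) (i : Fin 2) : (p - q) i = p i - q i := rfl

set_option maxHeartbeats 1000000 in
/-- If β, β' ≤ 1 and there is a bi-Lipschitz bijection between
Γ_β = {(x,x^β) : x ≥ 1} ∪ {(x,0) : x ≥ 1} and Γ_{β'} mapping each component curve onto the
corresponding one, then β = β'. -/
theorem stmt19 (β β' : ℝ) (hβ : β ≤ 1) (hβ' : β' ≤ 1)
    (F : EuclideanSpace ℝ (Fin 2) → EuclideanSpace ℝ (Fin 2)) (M : ℝ) (hM : 1 ≤ M)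
    (hbij : Set.BijOn F (powCurve β ∪ horizRay) (powCurve β' ∪ horizRay))
    (him₁ : F '' powCurve β = powCurve β') (him₂ : F '' horizRay = horizRay)
    (hbl : ∀ x ∈ powCurve β ∪ horizRay, ∀ y ∈ powCurve β ∪ horizRay,
      (1 / M) * ‖x - y‖ ≤ ‖F x - F y‖ ∧ ‖F x - F y‖ ≤ M * ‖x - y‖) :
    β = β' := by
  by_contra hne
  have hMpos : 0 < M := lt_of_lt_of_le one_pos hM
  -- the image of the base point (1,0)
  have hq0 : pt2 1 0 ∈ horizRay := ⟨le_refl 1, rfl⟩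
  have haR : F (pt2 1 0) ∈ horizRay := him₂ ▸ Set.mem_image_of_mem F hq0
  set A : ℝ := F (pt2 1 0) 0 with hAdef
  obtain ⟨hA1, hA0⟩ := haR
  rw [← hAdef] at hA1
  clear_value A
  -- constants
  set K : ℝ := Real.log (2*M + A) + Real.log (4*M) with hKdef
  have hKnn : 0 ≤ K := add_nonneg (Real.log_nonneg (by linarith)) (Real.log_nonneg (by linarith))
  set D : ℝ := |β - β'| with hDdef
  have hDpos : 0 < D := abs_pos.mpr (sub_ne_zero.mpr hne)
  set x : ℝ := max (2 + 2*M*A) (Real.exp ((Real.log M + |β'| * K + 1)/D)) with hxdef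
  have hxX : 2 + 2*M*A ≤ x := le_max_left _ _
  have hx1 : 1 ≤ x := by nlinarith
  have hxpos : 0 < x := by linarith
  have hxlog : (Real.log M + |β'| * K + 1)/D ≤ Real.log x := by
    have h := Real.log_le_log (Real.exp_pos _) (le_max_right (2 + 2*M*A)
      (Real.exp ((Real.log M + |β'| * K + 1)/D)))
    rwa [Real.log_exp] at h
  clear_value x
  -- the point p = (x, x^β) and its image
  set p : EuclideanSpace ℝ (Fin 2) := pt2 x (x ^ β) with hpdef
  have hpC : p ∈ powCurve β := ⟨hx1, rfl⟩
  have hpU : p ∈ powCurve β ∪ horizRay := Or.inl hpC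
  have hFpC : F p ∈ powCurve β' := him₁ ▸ Set.mem_image_of_mem F hpC
  set y : ℝ := F p 0 with hydef
  obtain ⟨hy1, hFp1⟩ := hFpC
  rw [← hydef] at hy1 hFp1
  clear_value y
  have hypos : 0 < y := by linarith
  have hxb : 0 < x ^ β := Real.rpow_pos_of_pos hxpos β
  have hyb : 0 < y ^ β' := Real.rpow_pos_of_pos hypos β'
  have hxbx : x ^ β ≤ x := by
    calc x ^ β ≤ x ^ (1:ℝ) := Real.rpow_le_rpow_of_exponent_le hx1 hβ
    _ = x := Real.rpow_one x
  have hyby : y ^ β' ≤ y := by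
    calc y ^ β' ≤ y ^ (1:ℝ) := Real.rpow_le_rpow_of_exponent_le hy1 hβ'
    _ = y := Real.rpow_one y
  -- (C) : y^β' ≤ M * x^β, using q = (x,0)
  have hqR : pt2 x 0 ∈ horizRay := ⟨hx1, rfl⟩
  have hFqR : F (pt2 x 0) ∈ horizRay := him₂ ▸ Set.mem_image_of_mem F hqR
  have hC : y ^ β' ≤ M * x ^ β := by
    have h1 := (hbl p hpU (pt2 x 0) (Or.inr hqR)).2
    have h2 : y ^ β' ≤ ‖F p - F (pt2 x 0)‖ := by
      have h := comp_le_norm (F p - F (pt2 x 0)) 1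
      rw [sub_apply2, hFp1, hFqR.2, sub_zero, abs_of_pos hyb] at h
      exact h
    have h3 : ‖p - pt2 x 0‖ ≤ x ^ β := by
      have h := norm_le_sum2 (p - pt2 x 0)
      rw [sub_apply2, sub_apply2, hpdef, pt2_zero, pt2_zero, pt2_one, pt2_one, sub_self,
        sub_zero, abs_zero, abs_of_pos hxb, zero_add] at h
      exact h
    calc y ^ β' ≤ ‖F p - F (pt2 x 0)‖ := h2
    _ ≤ M * ‖p - pt2 x 0‖ := h1
    _ ≤ M * x ^ β := mul_le_mul_of_nonneg_left h3 hMpos.le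
  -- (B) : x^β ≤ M * y^β', using a preimage of (y,0)
  have hyR : pt2 y 0 ∈ horizRay := ⟨hy1, rfl⟩
  obtain ⟨r, hrR, hFr⟩ : ∃ r ∈ horizRay, F r = pt2 y 0 := by
    rw [← him₂] at hyR; exact hyR
  have hB : x ^ β ≤ M * y ^ β' := by
    have h1 := (hbl p hpU r (Or.inr hrR)).1
    have h2 : x ^ β ≤ ‖p - r‖ := by
      have h := comp_le_norm (p - r) 1
      rw [sub_apply2, hpdef, pt2_one, hrR.2, sub_zero, abs_of_pos hxb] at h
      exact h
    have h3 : ‖F p - F r‖ ≤ y ^ β' := by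
      rw [hFr]
      have h := norm_le_sum2 (F p - pt2 y 0)
      rw [sub_apply2, sub_apply2, pt2_zero, pt2_one, hFp1, ← hydef, sub_self,
        sub_zero, abs_zero, abs_of_pos hyb, zero_add] at h
      exact h
    have h4 : (1/M) * x ^ β ≤ y ^ β' :=
      le_trans (mul_le_mul_of_nonneg_left h2 (by positivity)) (le_trans h1 h3)
    calc x ^ β = M * ((1/M) * x ^ β) := by field_simp
    _ ≤ M * y ^ β' := by nlinarith
  -- distance from p to the base point, and comparability of x and y
  have hpq0 : ‖p - pt2 1 0‖ ≤ 2 * x := by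
    have h := norm_le_sum2 (p - pt2 1 0)
    rw [sub_apply2, sub_apply2, hpdef, pt2_zero, pt2_zero, pt2_one, pt2_one, sub_zero,
      abs_of_pos hxb, abs_of_nonneg (by linarith : (0:ℝ) ≤ x - 1)] at h
    linarith
  have hpq0' : x - 1 ≤ ‖p - pt2 1 0‖ := by
    have h := comp_le_norm (p - pt2 1 0) 0
    rw [sub_apply2, hpdef, pt2_zero, pt2_zero, abs_of_nonneg (by linarith : (0:ℝ) ≤ x - 1)] at h
    exact h
  have hup := (hbl p hpU (pt2 1 0) (Or.inr hq0)).2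
  have hlo := (hbl p hpU (pt2 1 0) (Or.inr hq0)).1
  -- (D) : y ≤ (2M + A) x
  have hDx : y ≤ (2*M + A) * x := by
    have h1 : y ≤ ‖F p - F (pt2 1 0)‖ + A := by
      have h := comp_le_norm (F p - F (pt2 1 0)) 0
      rw [sub_apply2, ← hydef, ← hAdef, abs_sub_le_iff] at h
      linarith [h.1]
    have h2 : ‖F p - F (pt2 1 0)‖ ≤ M * (2 * x) :=
      le_trans hup (mul_le_mul_of_nonneg_left hpq0 hMpos.le)
    nlinarith [mul_nonneg (by linarith : (0:ℝ) ≤ A) (by linarith : (0:ℝ) ≤ x - 1)]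
  -- (E) : (x-1)/M ≤ 2y + A, hence y ≥ x/(4M)
  have hEx : (x - 1) / M ≤ 2 * y + A := by
    have h1 : ‖F p - F (pt2 1 0)‖ ≤ 2 * y + A := by
      have h := norm_le_sum2 (F p - F (pt2 1 0))
      rw [sub_apply2, sub_apply2, ← hydef, ← hAdef, hFp1, hA0, sub_zero, abs_of_pos hyb] at h
      have h' : |y - A| ≤ y + A := by
        rw [abs_sub_le_iff]; constructor <;> linarith
      linarith
    have h2 : (x - 1) / M ≤ ‖F p - F (pt2 1 0)‖ := by
      have hstep : (x - 1) / M ≤ (1/M) * ‖p - pt2 1 0‖ := by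
        rw [div_eq_mul_inv, mul_comm, ← one_div]
        exact mul_le_mul_of_nonneg_left hpq0' (by positivity)
      exact le_trans hstep hlo
    linarith
  have hyx : x / (4*M) ≤ y := by
    rw [div_le_iff₀ (by positivity)]
    have h1 : x - 1 ≤ M * (2 * y + A) := by
      rw [div_le_iff₀ hMpos] at hEx; linarith
    nlinarith
  -- logarithmic estimates
  have hlogy_up : Real.log y ≤ Real.log (2*M + A) + Real.log x := by
    have h := Real.log_le_log hypos hDx
    rwa [Real.log_mul (by positivity) (by positivity)] at h
  have hlogy_lo : Real.log x - Real.log (4*M) ≤ Real.log y := by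
    have h := Real.log_le_log (by positivity) hyx
    rwa [Real.log_div (by positivity) (by positivity)] at h
  have habs1 : |Real.log y - Real.log x| ≤ K := by
    rw [abs_le]
    constructor
    · have : 0 ≤ Real.log (2*M + A) := Real.log_nonneg (by linarith)
      linarith
    · have : 0 ≤ Real.log (4*M) := Real.log_nonneg (by linarith)
      linarith
  have hlog1 : β' * Real.log y ≤ Real.log M + β * Real.log x := by
    have h := Real.log_le_log hyb hC
    rwa [Real.log_rpow hypos, Real.log_mul (by positivity) (ne_of_gt hxb),
      Real.log_rpow hxpos] at h
  have hlog2 : β * Real.log x ≤ Real.log M + β' * Real.log y := by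
    have h := Real.log_le_log hxb hB
    rwa [Real.log_rpow hxpos, Real.log_mul (by positivity) (ne_of_gt hyb),
      Real.log_rpow hypos] at h
  have habs2 : |β * Real.log x - β' * Real.log y| ≤ Real.log M := by
    rw [abs_le]; constructor <;> linarith
  have hlogxnn : 0 ≤ Real.log x := Real.log_nonneg hx1
  have key : D * Real.log x ≤ Real.log M + |β'| * K := by
    have heq : (β - β') * Real.log x
        = (β * Real.log x - β' * Real.log y) + β' * (Real.log y - Real.log x) := by ring
    calc D * Real.log x = |(β - β') * Real.log x| := by
          rw [abs_mul, abs_of_nonneg hlogxnn]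
      _ ≤ |β * Real.log x - β' * Real.log y| + |β' * (Real.log y - Real.log x)| := by
          rw [heq]; exact abs_add_le _ _
      _ ≤ Real.log M + |β'| * K := by
          rw [abs_mul]
          exact add_le_add habs2 (mul_le_mul_of_nonneg_left habs1 (abs_nonneg β'))
  have hfin : Real.log M + |β'| * K + 1 ≤ D * Real.log x := by
    calc Real.log M + |β'| * K + 1 = D * ((Real.log M + |β'| * K + 1)/D) := by
          field_simp
      _ ≤ D * Real.log x := mul_le_mul_of_nonneg_left hxlog (le_of_lt hDpos)
  linarith
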